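/- For generic a₁, a₂, b₁, b₂, t ∈ ℂ*, the following scalar identity of rational functions holds, for all integers i, j with 0 ≤ j ≤ n and i arbitrary: (1−xb₂t^i)(1−t^{i−j+1})/(a₂b₂t^i(1−t^{i+1})) + (1−a₂^{-1}b₂^{-1}t^{-i}) = (1−a₂^{-1}b₂^{-1}t^{-(j−1)})(1−t^j)(1−xb₂t^i)/((1−xb₂t^{j−1})(1−t^{i+1})) + (1−a₂^{-1}x)(1−xb₂t^{-1})(1−t^{i−j+1}) t^j /((1−xb₂t^{j−1})(1−t^{i+1})), as rational functions in x. -/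

import Mathlib

set_option maxHeartbeats 1600000

/-- Key scalar identity in the proof of the three-term relations (Lemma 5.4). -/
theorem three_term_scalar_identity_one (n : ℕ) (i : ℤ) (j : ℕ) (hj : j ≤ n)
    (a₂ b₂ t x : ℂ) (ha : a₂ ≠ 0) (hb : b₂ ≠ 0) (ht : t ≠ 0)
    (h1 : 1 - t ^ (i + 1) ≠ 0) (h2 : 1 - x * b₂ * t ^ ((j : ℤ) - 1) ≠ 0) :
    (1 - x * b₂ * t ^ i) * (1 - t ^ (i - (j : ℤ) + 1)) / (a₂ * b₂ * t ^ i * (1 - t ^ (i + 1))) +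
        (1 - a₂⁻¹ * b₂⁻¹ * t ^ (-i)) =
      (1 - a₂⁻¹ * b₂⁻¹ * t ^ (-((j : ℤ) - 1))) * (1 - t ^ (j : ℤ)) * (1 - x * b₂ * t ^ i) /
          ((1 - x * b₂ * t ^ ((j : ℤ) - 1)) * (1 - t ^ (i + 1))) +
        (1 - a₂⁻¹ * x) * (1 - x * b₂ * t ^ (-1 : ℤ)) * (1 - t ^ (i - (j : ℤ) + 1)) * t ^ (j : ℤ) /
          ((1 - x * b₂ * t ^ ((j : ℤ) - 1)) * (1 - t ^ (i + 1))) := by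
  have e1 : t ^ (i + 1) = t ^ i * t := by rw [zpow_add₀ ht, zpow_one]
  have e2 : t ^ (i - (j : ℤ) + 1) = t ^ i * t / t ^ (j : ℤ) := by
    rw [zpow_add₀ ht, zpow_sub₀ ht, zpow_one]; ring
  have e3 : t ^ (-i) = (t ^ i)⁻¹ := by rw [zpow_neg]
  have e4 : t ^ ((j : ℤ) - 1) = t ^ (j : ℤ) / t := by rw [zpow_sub₀ ht, zpow_one]
  have e5 : t ^ (-((j : ℤ) - 1)) = t / t ^ (j : ℤ) := by
    rw [zpow_neg, zpow_sub₀ ht, zpow_one]; field_simp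
  have e6 : t ^ (-1 : ℤ) = t⁻¹ := by rw [zpow_neg, zpow_one]
  rw [e1] at h1
  rw [e4] at h2
  rw [e1, e2, e3, e4, e5, e6]
  generalize hTd : t ^ i = T at *
  generalize hSd : t ^ (j : ℤ) = S at *
  have hT : T ≠ 0 := hTd ▸ zpow_ne_zero _ ht
  have hS : S ≠ 0 := hSd ▸ zpow_ne_zero _ ht
  have h2' : t - x * b₂ * S ≠ 0 := by
    have h2c := h2
    field_simp at h2c
    intro h
    apply h2c
    linear_combination h / t
  have key : 1 - x * b₂ * (S / t) = (t - x * b₂ * S) / t := by field_simp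
  have key2 : 1 - x * b₂ * t⁻¹ = (t - x * b₂) / t := by field_simp
  have key3 : 1 - T * t / S = (S - T * t) / S := by field_simp
  have key4 : 1 - a₂⁻¹ * b₂⁻¹ * T⁻¹ = (a₂ * b₂ * T - 1) / (a₂ * b₂ * T) := by
    field_simp
  have key5 : 1 - a₂⁻¹ * b₂⁻¹ * (t / S) = (a₂ * b₂ * S - t) / (a₂ * b₂ * S) := by
    field_simp
  have key6 : 1 - a₂⁻¹ * x = (a₂ - x) / a₂ := by field_simp
  rw [key, key2, key3, key4, key5, key6]
  have hD1 : a₂ * b₂ * T * (1 - T * t) ≠ 0 :=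
    mul_ne_zero (mul_ne_zero (mul_ne_zero ha hb) hT) h1
  have hD2 : (t - x * b₂ * S) / t * (1 - T * t) ≠ 0 :=
    mul_ne_zero (div_ne_zero h2' ht) h1
  rw [← add_div, div_add' _ _ _ hD1, div_eq_div_iff hD1 hD2]
  have hM : a₂ * b₂ * T * S * t ≠ 0 := by
    exact mul_ne_zero (mul_ne_zero (mul_ne_zero (mul_ne_zero ha hb) hT) hS) ht
  apply mul_left_cancel₀ hM
  field_simp
  ring
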